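/- arXiv:2305.05769 — 6 statements merged into one kernel-verified Lean document; each statement's English description precedes it below -/
import Mathlib

section
/- The function (ρ, m, E) ↦ E - ‖m‖²/(2ρ) is concave on the open half-space {ρ > 0} ⊂ ℝ × ℝ^d × ℝ. -/
theorem internal_energy_concave (d : ℕ) :
    ConcaveOn ℝ {U : ℝ × EuclideanSpace ℝ (Fin d) × ℝ | 0 < U.1}
      (fun U => U.2.2 - ‖U.2.1‖ ^ 2 / (2 * U.1)) := by
  constructor
  · exact (convex_Ioi (0:ℝ)).linear_preimage (LinearMap.fst ℝ ℝ _)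
  · rintro ⟨ρ₁, m₁, E₁⟩ h₁ ⟨ρ₂, m₂, E₂⟩ h₂ a b ha hb hab
    simp only [Set.mem_setOf_eq] at h₁ h₂
    simp only [Prod.smul_mk, Prod.mk_add_mk, smul_eq_mul]
    set x := ‖m₁‖ with hx
    set y := ‖m₂‖ with hy
    have hxn : (0:ℝ) ≤ x := norm_nonneg _
    have hyn : (0:ℝ) ≤ y := norm_nonneg _
    have hρ : 0 < a * ρ₁ + b * ρ₂ := by
      rcases ha.lt_or_eq with h | h
      · exact add_pos_of_pos_of_nonneg (mul_pos h h₁) (mul_nonneg hb h₂.le)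
      · have hb1 : b = 1 := by linarith
        simp [← h, hb1, h₂]
    have h1 : ‖a • m₁ + b • m₂‖ ≤ a * x + b * y := by
      calc ‖a • m₁ + b • m₂‖ ≤ ‖a • m₁‖ + ‖b • m₂‖ := norm_add_le _ _
        _ = a * x + b * y := by
          rw [norm_smul, norm_smul, Real.norm_eq_abs, Real.norm_eq_abs,
            abs_of_nonneg ha, abs_of_nonneg hb]
    have hn2 : ‖a • m₁ + b • m₂‖ ^ 2 ≤ (a * x + b * y) ^ 2 := by
      have := norm_nonneg (a • m₁ + b • m₂)
      nlinarith
    have key : ‖a • m₁ + b • m₂‖ ^ 2 / (2 * (a * ρ₁ + b * ρ₂))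
        ≤ a * x ^ 2 / (2 * ρ₁) + b * y ^ 2 / (2 * ρ₂) := by
      rw [div_add_div _ _ (by positivity) (by positivity),
        div_le_div_iff₀ (by positivity) (by positivity)]
      nlinarith [hn2, mul_pos h₁ h₂,
        mul_nonneg (mul_nonneg ha hb) (sq_nonneg (x * ρ₂ - y * ρ₁))]
    have e1 : a * (E₁ - x ^ 2 / (2 * ρ₁)) = a * E₁ - a * x ^ 2 / (2 * ρ₁) := by ring
    have e2 : b * (E₂ - y ^ 2 / (2 * ρ₂)) = b * E₂ - b * y ^ 2 / (2 * ρ₂) := by ring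
    rw [e1, e2]
    linarith
end

section
/- Let M be a diagonal n×n matrix with strictly positive diagonal entries and L an n×n matrix with L𝟙 = 0. Suppose M + Δt·L is invertible with (M + Δt·L)⁻¹ ≥ 0 entrywise for some Δt > 0. If b ∈ ℝⁿ satisfies M⁻¹b ≥ ε𝟙 entrywise for some ε > 0, then the solution x of (M + Δt·L)x = b satisfies x ≥ ε𝟙 entrywise. -/
theorem positivity_from_monotone_system (n : ℕ) (M L : Matrix (Fin n) (Fin n) ℝ)
    (hMdiag : ∀ i j, i ≠ j → M i j = 0) (hMpos : ∀ i, 0 < M i i)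
    (hL : L.mulVec (fun _ => 1) = 0)
    (dt : ℝ) (hdt : 0 < dt)
    (hunit : IsUnit (M + dt • L))
    (hinv : ∀ i j, 0 ≤ (M + dt • L)⁻¹ i j)
    (ε : ℝ) (hε : 0 < ε)
    (b : Fin n → ℝ) (hb : ∀ i, ε ≤ M⁻¹.mulVec b i)
    (x : Fin n → ℝ) (hx : (M + dt • L).mulVec x = b) :
    ∀ i, ε ≤ x i := by
  set A := M + dt • L with hA
  -- M is invertible
  have hMunit : IsUnit M := by
    have : IsUnit M.det := by
      have hdet : M.det = ∏ i, M i i := by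
        apply Matrix.det_of_upperTriangular
        intro i j hij
        exact hMdiag i j (ne_of_gt hij)
      rw [hdet]
      exact (Finset.prod_pos (fun i _ => hMpos i)).ne'.isUnit
    exact (Matrix.isUnit_iff_isUnit_det M).mpr this
  -- b i ≥ ε * M i i
  have hbM : ∀ i, ε * M i i ≤ b i := by
    intro i
    have hMb : M.mulVec (M⁻¹.mulVec b) = b := by
      rw [Matrix.mulVec_mulVec, Matrix.mul_nonsing_inv _ ((Matrix.isUnit_iff_isUnit_det M).mp hMunit), Matrix.one_mulVec]
    have hMv : ∀ (v : Fin n → ℝ) i, M.mulVec v i = M i i * v i := by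
      intro v i
      simp only [Matrix.mulVec, dotProduct]
      rw [Finset.sum_eq_single i]
      · intro j _ hj; rw [hMdiag i j (Ne.symm hj), zero_mul]
      · simp
    have := hMv (M⁻¹.mulVec b) i
    rw [hMb] at this
    rw [this]
    nlinarith [hb i, hMpos i]
  -- A (x - ε • 1) = b - ε • (M 1)
  have hA1 : A.mulVec (fun _ => 1) = M.mulVec (fun _ => 1) := by
    rw [hA, Matrix.add_mulVec, Matrix.smul_mulVec, hL, smul_zero, add_zero]
  have key : A.mulVec (x - ε • (fun _ => (1:ℝ))) = b - ε • M.mulVec (fun _ => 1) := by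
    rw [Matrix.mulVec_sub, hx, Matrix.mulVec_smul, hA1]
  -- the RHS is nonneg
  have hrhs : ∀ i, 0 ≤ (b - ε • M.mulVec (fun _ => 1)) i := by
    intro i
    have : M.mulVec (fun _ => 1) i = ∑ j, M i j := by
      simp [Matrix.mulVec, dotProduct]
    have hsum : ∑ j, M i j = M i i := by
      rw [Finset.sum_eq_single i]
      · intro j _ hj; exact hMdiag i j (Ne.symm hj)
      · simp
    simp only [Pi.sub_apply, Pi.smul_apply, smul_eq_mul, this, hsum]
    linarith [hbM i]
  -- apply A⁻¹
  have hAinv : A⁻¹.mulVec (A.mulVec (x - ε • (fun _ => (1:ℝ)))) = x - ε • (fun _ => (1:ℝ)) := by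
    rw [Matrix.mulVec_mulVec, Matrix.nonsing_inv_mul _ ((Matrix.isUnit_iff_isUnit_det A).mp hunit), Matrix.one_mulVec]
  intro i
  have h0 : 0 ≤ (x - ε • (fun _ => 1 : Fin n → ℝ)) i := by
    rw [← hAinv, key]
    simp only [Matrix.mulVec, dotProduct]
    exact Finset.sum_nonneg fun j _ => mul_nonneg (hinv i j) (hrhs j)
  have := h0
  simp only [Pi.sub_apply, Pi.smul_apply, smul_eq_mul, mul_one] at this
  linarith
end

section
/- Let U = (ρ, m, E) with ρ > 0, and define the limited state Ũ(θ) = θ(Û - Ū) + Ū where Û and Ū both have positive density and Ū satisfies ρe(Ū) ≥ ε > 0. If θ = min{1, (ρe(Ū) - ε)/(ρe(Ū) - min_x ρe(Û(x)))} when min_x ρe(Û(x)) < ε, then for concave ρe, the limited state satisfies ρe(Ũ(x)) ≥ ε at every point x in the finite set over which the minimum is taken. -/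
lemma zs_aux (θ ρ1 ρ2 a b n : ℝ) (hθ0 : 0 ≤ θ) (hθ1 : θ ≤ 1)
    (h1 : 0 < ρ1) (h2 : 0 < ρ2) (hn0 : 0 ≤ n)
    (hn : n ≤ θ * a + (1 - θ) * b) :
    n ^ 2 / (2 * (θ * (ρ1 - ρ2) + ρ2)) ≤ θ * (a ^ 2 / (2 * ρ1)) + (1 - θ) * (b ^ 2 / (2 * ρ2)) := by
  have hρ : 0 < θ * (ρ1 - ρ2) + ρ2 := by
    have hc : 0 < min ρ1 ρ2 := lt_min h1 h2
    nlinarith [mul_nonneg hθ0 (sub_nonneg.mpr (min_le_left ρ1 ρ2)),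
      mul_nonneg (sub_nonneg.mpr hθ1) (sub_nonneg.mpr (min_le_right ρ1 ρ2))]
  rw [div_le_iff₀ (by positivity)]
  have e1 : θ * (a ^ 2 / (2 * ρ1)) + (1 - θ) * (b ^ 2 / (2 * ρ2))
      = (θ * a ^ 2 * (2 * ρ2) + (1 - θ) * b ^ 2 * (2 * ρ1)) / ((2 * ρ1) * (2 * ρ2)) := by
    field_simp
  rw [e1, div_mul_eq_mul_div, le_div_iff₀ (by positivity)]
  have hn2 : n ^ 2 ≤ (θ * a + (1 - θ) * b) ^ 2 := by nlinarith
  nlinarith [mul_nonneg (mul_nonneg hθ0 (by linarith : (0:ℝ) ≤ 1 - θ)) (sq_nonneg (a * ρ2 - b * ρ1)),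
    mul_pos h1 h2, mul_nonneg hθ0 (by linarith : (0:ℝ) ≤ 1 - θ)]

theorem zhang_shu_energy_limiter (d : ℕ) (ι : Type*) [Fintype ι] [Nonempty ι]
    (ε : ℝ) (hε : 0 < ε)
    (Ubar : ℝ × EuclideanSpace ℝ (Fin d) × ℝ)
    (Uhat : ι → ℝ × EuclideanSpace ℝ (Fin d) × ℝ)
    (ρe : (ℝ × EuclideanSpace ℝ (Fin d) × ℝ) → ℝ)
    (hρe : ρe = fun U => U.2.2 - ‖U.2.1‖ ^ 2 / (2 * U.1))
    (hbar : 0 < Ubar.1) (hhat : ∀ x, 0 < (Uhat x).1)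
    (hbarε : ε ≤ ρe Ubar)
    (m : ℝ) (hm : m = Finset.univ.inf' Finset.univ_nonempty (fun x => ρe (Uhat x)))
    (θ : ℝ)
    (hθ : θ = if m < ε then min 1 ((ρe Ubar - ε) / (ρe Ubar - m)) else 1) :
    ∀ x, ε ≤ ρe (θ • (Uhat x - Ubar) + Ubar) := by
  intro x
  have hθ0 : 0 ≤ θ := by
    rw [hθ]
    split_ifs with h
    · exact le_min zero_le_one (div_nonneg (by linarith) (by linarith))
    · exact zero_le_one
  have hθ1 : θ ≤ 1 := by
    rw [hθ]
    split_ifs with h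
    · exact min_le_left _ _
    · exact le_refl 1
  -- key inequality: ε ≤ θ * m + (1 - θ) * ρe Ubar
  have hkey : ε ≤ θ * m + (1 - θ) * ρe Ubar := by
    rw [hθ]
    split_ifs with h
    · have hden : 0 < ρe Ubar - m := by linarith
      have h2 : min 1 ((ρe Ubar - ε) / (ρe Ubar - m)) ≤ (ρe Ubar - ε) / (ρe Ubar - m) :=
        min_le_right _ _
      have h3 : min 1 ((ρe Ubar - ε) / (ρe Ubar - m)) * (ρe Ubar - m) ≤ ρe Ubar - ε := by
        rw [← le_div_iff₀ hden]; exact h2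
      nlinarith
    · push_neg at h; nlinarith
  -- m ≤ ρe (Uhat x)
  have hmle : m ≤ ρe (Uhat x) := by
    rw [hm]
    exact Finset.inf'_le _ (Finset.mem_univ x)
  have hstep : ε ≤ θ * ρe (Uhat x) + (1 - θ) * ρe Ubar := by nlinarith
  -- concavity
  have hnorm : ‖(θ • (Uhat x - Ubar) + Ubar).2.1‖
      ≤ θ * ‖(Uhat x).2.1‖ + (1 - θ) * ‖Ubar.2.1‖ := by
    have heq : (θ • (Uhat x - Ubar) + Ubar).2.1 = θ • (Uhat x).2.1 + (1 - θ) • Ubar.2.1 := by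
      simp [smul_sub, sub_smul, one_smul]
      abel
    rw [heq]
    calc ‖θ • (Uhat x).2.1 + (1 - θ) • Ubar.2.1‖
        ≤ ‖θ • (Uhat x).2.1‖ + ‖(1 - θ) • Ubar.2.1‖ := norm_add_le _ _
      _ = θ * ‖(Uhat x).2.1‖ + (1 - θ) * ‖Ubar.2.1‖ := by
          rw [norm_smul, norm_smul, Real.norm_of_nonneg hθ0,
            Real.norm_of_nonneg (by linarith : (0:ℝ) ≤ 1 - θ)]
  have hfst : (θ • (Uhat x - Ubar) + Ubar).1 = θ * ((Uhat x).1 - Ubar.1) + Ubar.1 := by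
    simp
  have hsnd : (θ • (Uhat x - Ubar) + Ubar).2.2 = θ * ((Uhat x).2.2 - Ubar.2.2) + Ubar.2.2 := by
    simp
  have hconc : θ * ρe (Uhat x) + (1 - θ) * ρe Ubar ≤ ρe (θ • (Uhat x - Ubar) + Ubar) := by
    rw [hρe]
    simp only
    rw [hfst, hsnd]
    have := zs_aux θ (Uhat x).1 Ubar.1 ‖(Uhat x).2.1‖ ‖Ubar.2.1‖
      ‖(θ • (Uhat x - Ubar) + Ubar).2.1‖ hθ0 hθ1 (hhat x) hbar (norm_nonneg _) hnorm
    nlinarith [this]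
  linarith
end

section
/- Let ρ̄ > 0, ε ∈ (0, ρ̄], let ρ : X → ℝ be a function on a finite set X with mean value ρ̄ (i.e., there exist weights making ρ̄ a convex combination of the values), and define θ = min{1, (ρ̄ - ε)/(ρ̄ - min_x ρ(x))} when min_x ρ(x) < ρ̄. Then the function ρ̂(x) = θ(ρ(x) - ρ̄) + ρ̄ satisfies ρ̂(x) ≥ ε for all x ∈ X, and has the same mean ρ̄. -/
theorem zhang_shu_density_limiter (ι : Type*) [Fintype ι] [Nonempty ι]
    (ρbar ε : ℝ) (hρbar : 0 < ρbar) (hε : 0 < ε) (hερ : ε ≤ ρbar)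
    (w : ι → ℝ) (hw : ∀ x, 0 ≤ w x) (hw1 : ∑ x, w x = 1)
    (ρ : ι → ℝ) (hmean : ∑ x, w x * ρ x = ρbar)
    (m : ℝ) (hm : m = Finset.univ.inf' Finset.univ_nonempty ρ)
    (θ : ℝ) (hθ : θ = if m < ρbar then min 1 ((ρbar - ε) / (ρbar - m)) else 1) :
    (∀ x, ε ≤ θ * (ρ x - ρbar) + ρbar) ∧
    (∑ x, w x * (θ * (ρ x - ρbar) + ρbar) = ρbar) := by
  have hmle : ∀ x, m ≤ ρ x := by
    intro x
    rw [hm]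
    exact Finset.inf'_le _ (Finset.mem_univ x)
  constructor
  · intro x
    by_cases h : m < ρbar
    · have hpos : 0 < ρbar - m := by linarith
      have hθ0 : 0 ≤ θ := by
        rw [hθ, if_pos h]
        exact le_min zero_le_one (div_nonneg (by linarith) hpos.le)
      have hθle : θ ≤ (ρbar - ε) / (ρbar - m) := by
        rw [hθ, if_pos h]; exact min_le_right _ _
      have h1 : θ * (ρbar - m) ≤ ρbar - ε := by
        rw [le_div_iff₀ hpos] at hθle; linarith
      have h2 : θ * (m - ρbar) ≤ θ * (ρ x - ρbar) :=
        mul_le_mul_of_nonneg_left (by linarith [hmle x]) hθ0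
      nlinarith
    · rw [hθ, if_neg h]
      push_neg at h
      have := hmle x
      linarith
  · have : ∀ x, w x * (θ * (ρ x - ρbar) + ρbar) =
        θ * (w x * ρ x) - θ * ρbar * w x + ρbar * w x := by
      intro x; ring
    simp only [this, Finset.sum_add_distrib, Finset.sum_sub_distrib,
      ← Finset.mul_sum, hmean, hw1]
    ring
end

section
/- Let λ̃ := Δt/Δx² > 0 (with coefficient absorbed), σ̃ > 1/2, and let A_D be the (2N)×(2N) one-dimensional Q¹ IIPG stiffness matrix given explicitly by: first row (1/Δx, -1/Δx, 0, …), last row (…, -1/Δx, 1/Δx), and interior rows of the repeating pattern (-1/(2Δx), (1+2σ̃)/(2Δx), (1-2σ̃)/(2Δx), -1/(2Δx)) centered appropriately. Then every row sum of A_D is zero, all diagonal entries are positive, and all off-diagonal entries are nonpositive. -/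
/-- The 1D `Q¹` IIPG stiffness matrix on a uniform mesh of `N` cells (`2N` degrees of
freedom), with mesh size `dx` and interior penalty parameter `σ`, Neumann boundary
conditions, evaluated with 2-point Gauss–Lobatto quadrature. -/
noncomputable def iipg1D (N : ℕ) (dx σ : ℝ) : Matrix (Fin (2 * N)) (Fin (2 * N)) ℝ :=
  fun i j =>
    if i.val = 0 then
      (if j.val = 0 then 1 / dx else if j.val = 1 then -(1 / dx) else 0)
    else if i.val = 2 * N - 1 then
      (if j.val = 2 * N - 1 then 1 / dx else if j.val = 2 * N - 2 then -(1 / dx) else 0)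
    else if i.val % 2 = 1 then
      (if j.val + 1 = i.val then -(1 / (2 * dx))
       else if j.val = i.val then (1 + 2 * σ) / (2 * dx)
       else if j.val = i.val + 1 then (1 - 2 * σ) / (2 * dx)
       else if j.val = i.val + 2 then -(1 / (2 * dx)) else 0)
    else
      (if j.val + 2 = i.val then -(1 / (2 * dx))
       else if j.val + 1 = i.val then (1 - 2 * σ) / (2 * dx)
       else if j.val = i.val then (1 + 2 * σ) / (2 * dx)
       else if j.val = i.val + 1 then -(1 / (2 * dx)) else 0)

lemma sum_ind (n a : ℕ) (ha : a < n) (x : ℝ) :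
    ∑ j ∈ Finset.range n, (if j = a then x else 0) = x := by
  rw [Finset.sum_ite_eq' (Finset.range n) a (fun _ => x)]
  simp [ha]

set_option maxHeartbeats 1000000 in
theorem iipg1D_sign_structure (N : ℕ) (hN : 1 ≤ N) (dx σ : ℝ)
    (hdx : 0 < dx) (hσ : 1 / 2 < σ) :
    (∀ i, ∑ j, iipg1D N dx σ i j = 0) ∧
    (∀ i, 0 < iipg1D N dx σ i i) ∧
    (∀ i j, i ≠ j → iipg1D N dx σ i j ≤ 0) := by
  have h1 : 0 < 1 / dx := by positivity
  have h2 : 0 < 1 / (2 * dx) := by positivity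
  have h3 : (1 - 2 * σ) / (2 * dx) ≤ 0 :=
    div_nonpos_of_nonpos_of_nonneg (by linarith) (by linarith)
  have hpos : 0 < (1 + 2 * σ) / (2 * dx) := div_pos (by linarith) (by linarith)
  refine ⟨?_, ?_, ?_⟩
  · intro i
    have hi : i.val < 2 * N := i.isLt
    have key : ∀ G : ℕ → ℝ, (∀ j : Fin (2 * N), iipg1D N dx σ i j = G j.val) →
        ∑ j, iipg1D N dx σ i j = ∑ j ∈ Finset.range (2 * N), G j := by
      intro G hG
      rw [← Fin.sum_univ_eq_sum_range]
      exact Finset.sum_congr rfl (fun j _ => hG j)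
    by_cases hi0 : i.val = 0
    · rw [key (fun jv => (if jv = 0 then 1 / dx else 0) + (if jv = 1 then -(1 / dx) else 0))
        (by intro j; simp only [iipg1D]
            split_ifs <;> first | ring1 | (exfalso; omega))]
      rw [Finset.sum_add_distrib, sum_ind _ _ (by omega), sum_ind _ _ (by omega)]
      ring
    · by_cases hiL : i.val = 2 * N - 1
      · rw [key (fun jv => (if jv = 2 * N - 1 then 1 / dx else 0) +
            (if jv = 2 * N - 2 then -(1 / dx) else 0))
          (by intro j; simp only [iipg1D]
              split_ifs <;> first | ring1 | (exfalso; omega))]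
        rw [Finset.sum_add_distrib, sum_ind _ _ (by omega), sum_ind _ _ (by omega)]
        ring
      · by_cases hodd : i.val % 2 = 1
        · have hb : i.val + 2 < 2 * N := by omega
          rw [key (fun jv => (if jv + 1 = i.val then -(1 / (2 * dx)) else 0) +
              (if jv = i.val then (1 + 2 * σ) / (2 * dx) else 0) +
              (if jv = i.val + 1 then (1 - 2 * σ) / (2 * dx) else 0) +
              (if jv = i.val + 2 then -(1 / (2 * dx)) else 0))
            (by intro j; simp only [iipg1D]
                split_ifs <;> first | ring1 | (exfalso; omega))]
          have e1 : ∀ jv : ℕ, (if jv + 1 = i.val then -(1 / (2 * dx)) else 0) =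
              (if jv = i.val - 1 then -(1 / (2 * dx)) else 0) := by
            intro jv; split_ifs <;> first | ring1 | (exfalso; omega)
          simp only [e1]
          rw [Finset.sum_add_distrib, Finset.sum_add_distrib, Finset.sum_add_distrib,
            sum_ind _ _ (by omega), sum_ind _ _ (by omega), sum_ind _ _ (by omega),
            sum_ind _ _ (by omega)]
          ring
        · have hb : i.val + 1 < 2 * N := by omega
          have h2le : 2 ≤ i.val := by omega
          rw [key (fun jv => (if jv + 2 = i.val then -(1 / (2 * dx)) else 0) +
              (if jv + 1 = i.val then (1 - 2 * σ) / (2 * dx) else 0) +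
              (if jv = i.val then (1 + 2 * σ) / (2 * dx) else 0) +
              (if jv = i.val + 1 then -(1 / (2 * dx)) else 0))
            (by intro j; simp only [iipg1D]
                split_ifs <;> first | ring1 | (exfalso; omega))]
          have e1 : ∀ jv : ℕ, (if jv + 2 = i.val then -(1 / (2 * dx)) else 0) =
              (if jv = i.val - 2 then -(1 / (2 * dx)) else 0) := by
            intro jv; split_ifs <;> first | ring1 | (exfalso; omega)
          have e2 : ∀ jv : ℕ, (if jv + 1 = i.val then (1 - 2 * σ) / (2 * dx) else 0) =
              (if jv = i.val - 1 then (1 - 2 * σ) / (2 * dx) else 0) := by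
            intro jv; split_ifs <;> first | ring1 | (exfalso; omega)
          simp only [e1, e2]
          rw [Finset.sum_add_distrib, Finset.sum_add_distrib, Finset.sum_add_distrib,
            sum_ind _ _ (by omega), sum_ind _ _ (by omega), sum_ind _ _ (by omega),
            sum_ind _ _ (by omega)]
          ring
  · intro i
    have hi : i.val < 2 * N := i.isLt
    simp only [iipg1D]
    split_ifs <;> first | (exfalso; omega) | linarith
  · intro i j hij
    have hij' : i.val ≠ j.val := fun h => hij (Fin.ext h)
    simp only [iipg1D]
    split_ifs <;> first | (exfalso; omega) | linarith
end

section
/- Let A_D be the 1D Q¹ IIPG stiffness matrix as above with penalty σ̃ > 1/2, and let A_M be a diagonal matrix with strictly positive diagonal entries. Then for any Δt > 0, the matrix A_M + Δt·A_D is invertible and its inverse has all nonnegative entries. -/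
/-- General monotonicity lemma: sign pattern + positive row sums gives a monotone matrix. -/
private lemma monotone_of_sign_rowsum {n : ℕ} (A : Matrix (Fin n) (Fin n) ℝ)
    (hoff : ∀ i j, i ≠ j → A i j ≤ 0) (hrow : ∀ i, 0 < ∑ j, A i j) :
    IsUnit A ∧ ∀ i j, 0 ≤ A⁻¹ i j := by
  have hdiag : ∀ i, 0 < A i i := by
    intro i
    have h1 : ∑ j ∈ Finset.univ.erase i, A i j ≤ 0 :=
      Finset.sum_nonpos fun j hj => hoff i j (Finset.ne_of_mem_erase hj).symm
    have h2 : ∑ j ∈ Finset.univ.erase i, A i j + A i i = ∑ j, A i j :=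
      Finset.sum_erase_add _ _ (Finset.mem_univ i)
    have := hrow i
    linarith
  have hdet : A.det ≠ 0 := by
    apply det_ne_zero_of_sum_row_lt_diag
    intro k
    have h2 : ∑ j ∈ Finset.univ.erase k, A k j + A k k = ∑ j, A k j :=
      Finset.sum_erase_add _ _ (Finset.mem_univ k)
    have he : ∑ j ∈ Finset.univ.erase k, ‖A k j‖ = -∑ j ∈ Finset.univ.erase k, A k j := by
      rw [← Finset.sum_neg_distrib]
      exact Finset.sum_congr rfl fun j hj => by
        rw [Real.norm_eq_abs, abs_of_nonpos (hoff k j (Finset.ne_of_mem_erase hj).symm)]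
    rw [he, Real.norm_eq_abs, abs_of_pos (hdiag k)]
    have := hrow k
    linarith
  have hunit : IsUnit A := (Matrix.isUnit_iff_isUnit_det A).mpr (isUnit_iff_ne_zero.mpr hdet)
  refine ⟨hunit, fun i c => ?_⟩
  set x : Fin n → ℝ := fun k => A⁻¹ k c with hx
  have hmv : ∀ k, A.mulVec x k = if k = c then 1 else 0 := by
    intro k
    have h1 : A * A⁻¹ = 1 := Matrix.mul_nonsing_inv A (isUnit_iff_ne_zero.mpr hdet)
    have : (A * A⁻¹) k c = (1 : Matrix (Fin n) (Fin n) ℝ) k c := by rw [h1]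
    simpa [Matrix.mul_apply, Matrix.one_apply, Matrix.mulVec, dotProduct] using this
  obtain ⟨k, -, hk⟩ := Finset.exists_min_image Finset.univ x ⟨i, Finset.mem_univ i⟩
  have hk0 : 0 ≤ x k := by
    by_contra hneg
    push_neg at hneg
    have hle : A.mulVec x k ≤ (∑ j, A k j) * x k := by
      rw [Finset.sum_mul]
      simp only [Matrix.mulVec, dotProduct]
      apply Finset.sum_le_sum
      intro j _
      rcases eq_or_ne j k with rfl | hjk
      · exact le_of_eq rfl
      · exact mul_le_mul_of_nonpos_left (hk j (Finset.mem_univ j)) (hoff k j (Ne.symm hjk))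
    have hlt : (∑ j, A k j) * x k < 0 := mul_neg_of_pos_of_neg (hrow k) hneg
    have h0 : 0 ≤ A.mulVec x k := by rw [hmv k]; split <;> norm_num
    linarith
  exact le_trans hk0 (hk i (Finset.mem_univ i))



private lemma iipg1D_offdiag {N : ℕ} {dx σ : ℝ} (hdx : 0 < dx) (hσ : 1 / 2 < σ)
    (i j : Fin (2 * N)) (hij : i ≠ j) : iipg1D N dx σ i j ≤ 0 := by
  have hv : i.val ≠ j.val := fun h => hij (Fin.ext h)
  have h1 : -(1 / dx) ≤ 0 := neg_nonpos.mpr (by positivity)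
  have h2 : -(1 / (2 * dx)) ≤ 0 := neg_nonpos.mpr (by positivity)
  have h3 : (1 - 2 * σ) / (2 * dx) ≤ 0 :=
    div_nonpos_of_nonpos_of_nonneg (by linarith) (by linarith)
  unfold iipg1D
  split_ifs <;> first | exact le_rfl | exact h1 | exact h2 | exact h3 | (exfalso; omega)

private lemma sum_ind_fin {n : ℕ} {v : ℕ} (h : v < n) (x : ℝ) :
    ∑ j : Fin n, (if j.val = v then x else 0) = x := by
  rw [Finset.sum_congr rfl (g := fun j : Fin n => if j = ⟨v, h⟩ then x else 0)
    (fun j _ => by simp [Fin.ext_iff])]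
  simp

private lemma iipg1D_rowsum {N : ℕ} (hN : 1 ≤ N) (dx σ : ℝ) (i : Fin (2 * N)) :
    ∑ j, iipg1D N dx σ i j = 0 := by
  have hm : i.val < 2 * N := i.isLt
  rcases eq_or_ne i.val 0 with h0 | h0
  · rw [Finset.sum_congr rfl (g := fun j : Fin (2 * N) =>
        (if j.val = 0 then 1 / dx else 0) + (if j.val = 1 then -(1 / dx) else 0))
      (fun j _ => by unfold iipg1D; beta_reduce; split_ifs <;> first | ring1 | (exfalso; omega))]
    rw [Finset.sum_add_distrib, sum_ind_fin (by omega), sum_ind_fin (by omega)]; ring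
  rcases eq_or_ne i.val (2 * N - 1) with h1 | h1
  · rw [Finset.sum_congr rfl (g := fun j : Fin (2 * N) =>
        (if j.val = 2 * N - 1 then 1 / dx else 0) + (if j.val = 2 * N - 2 then -(1 / dx) else 0))
      (fun j _ => by unfold iipg1D; beta_reduce; split_ifs <;> first | ring1 | (exfalso; omega))]
    rw [Finset.sum_add_distrib, sum_ind_fin (by omega), sum_ind_fin (by omega)]; ring
  rcases eq_or_ne (i.val % 2) 1 with h2 | h2
  · rw [Finset.sum_congr rfl (g := fun j : Fin (2 * N) =>
        (if j.val = i.val - 1 then -(1 / (2 * dx)) else 0)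
        + (if j.val = i.val then (1 + 2 * σ) / (2 * dx) else 0)
        + (if j.val = i.val + 1 then (1 - 2 * σ) / (2 * dx) else 0)
        + (if j.val = i.val + 2 then -(1 / (2 * dx)) else 0))
      (fun j _ => by unfold iipg1D; beta_reduce; split_ifs <;> first | ring1 | (exfalso; omega))]
    simp only [Finset.sum_add_distrib]
    rw [sum_ind_fin (by omega), sum_ind_fin (by omega), sum_ind_fin (by omega),
      sum_ind_fin (by omega)]
    ring
  · rw [Finset.sum_congr rfl (g := fun j : Fin (2 * N) =>
        (if j.val = i.val - 2 then -(1 / (2 * dx)) else 0)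
        + (if j.val = i.val - 1 then (1 - 2 * σ) / (2 * dx) else 0)
        + (if j.val = i.val then (1 + 2 * σ) / (2 * dx) else 0)
        + (if j.val = i.val + 1 then -(1 / (2 * dx)) else 0))
      (fun j _ => by unfold iipg1D; beta_reduce; split_ifs <;> first | ring1 | (exfalso; omega))]
    simp only [Finset.sum_add_distrib]
    rw [sum_ind_fin (by omega), sum_ind_fin (by omega), sum_ind_fin (by omega),
      sum_ind_fin (by omega)]
    ring


theorem iipg1D_system_monotone (N : ℕ) (hN : 1 ≤ N) (dx σ dt : ℝ)
    (hdx : 0 < dx) (hσ : 1 / 2 < σ) (hdt : 0 < dt)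
    (AM : Matrix (Fin (2 * N)) (Fin (2 * N)) ℝ)
    (hMdiag : ∀ i j, i ≠ j → AM i j = 0) (hMpos : ∀ i, 0 < AM i i) :
    IsUnit (AM + dt • iipg1D N dx σ) ∧
    ∀ i j, 0 ≤ (AM + dt • iipg1D N dx σ)⁻¹ i j := by
  apply monotone_of_sign_rowsum
  · intro i j hij
    have h1 : (AM + dt • iipg1D N dx σ) i j = AM i j + dt * iipg1D N dx σ i j := by
      simp [Matrix.add_apply, Matrix.smul_apply, smul_eq_mul]
    rw [h1, hMdiag i j hij]
    have h2 := iipg1D_offdiag hdx hσ i j hij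
    nlinarith
  · intro i
    have hsplit : ∑ j, (AM + dt • iipg1D N dx σ) i j
        = (∑ j, AM i j) + dt * ∑ j, iipg1D N dx σ i j := by
      rw [Finset.mul_sum, ← Finset.sum_add_distrib]
      exact Finset.sum_congr rfl fun j _ => by simp [smul_eq_mul]
    rw [hsplit, iipg1D_rowsum hN, mul_zero, add_zero,
      Finset.sum_eq_single i (fun j _ hj => hMdiag i j (Ne.symm hj)) (by simp)]
    exact hMpos i
end
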